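/- arXiv:2303.16443 — 2 statements merged into one kernel-verified Lean document; each statement's English description precedes it below -/
import Mathlib

section
/- Let n, d, q be positive integers, let Z be a real n×d matrix such that ZᵀZ is invertible, and let P = Z(ZᵀZ)⁻¹Zᵀ be the orthogonal projection onto the column space of Z. Let B₀, B̂, C be real d×q matrices, let E be a real n×q matrix, and set R₀ ≥ 1 an integer. Let δ > 0, μ ≥ 0, λ > 0 be real numbers, set 𝒞(δ) = 1 + 2/δ, and assume 𝒞(δ)⁻¹ − 2μλ⁻² > 0. Suppose the following 'basic inequality' holds: ‖Z(B̂−B₀)‖_F² ≤ ‖Z(C−B₀)‖_F² + 2√(2R₀)·σ₁(P E)·(‖Z(B̂−B₀)‖_F + ‖Z(C−B₀)‖_F) + 4μ·σ₁(C)² + 2μλ⁻²·(‖Z(B̂−B₀)‖_F² + ‖Z(C−B₀)‖_F²). Then ‖Z(B̂−B₀)‖_F² ≤ (𝒞(δ)⁻¹ − 2μλ⁻²)⁻¹·{4μ·σ₁(C)² + 2(1+δ)R₀·σ₁(P E)²} + ((𝒞(δ) + 2μλ⁻²)/(𝒞(δ)⁻¹ − 2μλ⁻²))·‖Z(C−B₀)‖_F².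 -/
open Matrix

/-- `Aᵀ * A` is Hermitian for a real matrix `A`. -/
lemma herm {m n : ℕ} (A : Matrix (Fin m) (Fin n) ℝ) : (Aᵀ * A).IsHermitian := by
  have h := Matrix.isHermitian_conjTranspose_mul_self A
  simpa [Matrix.conjTranspose_eq_transpose_of_trivial] using h

/-- The largest singular value of a real matrix: the square root of the largest
eigenvalue of `Aᵀ * A`. -/
noncomputable def sigma1 {m n : ℕ} (A : Matrix (Fin m) (Fin n) ℝ) : ℝ :=
  Real.sqrt (⨆ i, (herm A).eigenvalues i)

/-- The Frobenius norm `‖A‖_F = √(trace (Aᵀ A))`. -/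
noncomputable def frobNorm {m n : ℕ} (A : Matrix (Fin m) (Fin n) ℝ) : ℝ :=
  Real.sqrt (Matrix.trace (Aᵀ * A))

/-- Deterministic core of Theorem 1: prediction-error oracle inequality, conditional
on the basic inequality from the minimizing property of the estimator. -/
theorem stmt_0 {n d q : ℕ} (hn : 0 < n) (hd : 0 < d) (hq : 0 < q)
    (Z : Matrix (Fin n) (Fin d) ℝ) (hZ : IsUnit (Zᵀ * Z).det)
    (B₀ Bhat C : Matrix (Fin d) (Fin q) ℝ) (E : Matrix (Fin n) (Fin q) ℝ)
    (R₀ : ℕ) (hR₀ : 1 ≤ R₀)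
    (δ μ lam : ℝ) (hδ : 0 < δ) (hμ : 0 ≤ μ) (hlam : 0 < lam)
    (hpos : (1 + 2 / δ)⁻¹ - 2 * μ * lam⁻¹ ^ 2 > 0)
    (hbasic :
      frobNorm (Z * (Bhat - B₀)) ^ 2 ≤
        frobNorm (Z * (C - B₀)) ^ 2
          + 2 * Real.sqrt (2 * R₀) * sigma1 (Z * (Zᵀ * Z)⁻¹ * Zᵀ * E)
              * (frobNorm (Z * (Bhat - B₀)) + frobNorm (Z * (C - B₀)))
          + 4 * μ * (sigma1 C) ^ 2
          + 2 * μ * lam⁻¹ ^ 2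
              * (frobNorm (Z * (Bhat - B₀)) ^ 2 + frobNorm (Z * (C - B₀)) ^ 2)) :
    frobNorm (Z * (Bhat - B₀)) ^ 2 ≤
      ((1 + 2 / δ)⁻¹ - 2 * μ * lam⁻¹ ^ 2)⁻¹
          * (4 * μ * (sigma1 C) ^ 2
              + 2 * (1 + δ) * R₀ * (sigma1 (Z * (Zᵀ * Z)⁻¹ * Zᵀ * E)) ^ 2)
        + (((1 + 2 / δ) + 2 * μ * lam⁻¹ ^ 2) / ((1 + 2 / δ)⁻¹ - 2 * μ * lam⁻¹ ^ 2))
            * frobNorm (Z * (C - B₀)) ^ 2 := by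
  set a := frobNorm (Z * (Bhat - B₀)) with ha
  set b := frobNorm (Z * (C - B₀)) with hb
  set s := sigma1 (Z * (Zᵀ * Z)⁻¹ * Zᵀ * E) with hs
  set σ := sigma1 C with hσ
  set K := 2 * μ * lam⁻¹ ^ 2 with hK
  set r := Real.sqrt (2 * R₀) with hr
  have hr2 : r ^ 2 = 2 * (R₀ : ℝ) := Real.sq_sqrt (by positivity)
  have hδ2 : (0:ℝ) < δ + 2 := by linarith
  have hM : (0:ℝ) < δ * (δ + 2) := by positivity
  have P : a ^ 2 * (δ * δ - K * (δ * (δ + 2))) ≤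
      δ * (δ + 2) * (4 * μ * σ ^ 2 + 2 * (1 + δ) * (R₀ : ℝ) * s ^ 2)
        + ((δ + 2) ^ 2 + K * (δ * (δ + 2))) * b ^ 2 := by
    rw [show δ * (δ + 2) * (4 * μ * σ ^ 2 + 2 * (1 + δ) * (R₀ : ℝ) * s ^ 2)
        = δ * (δ + 2) * (4 * μ * σ ^ 2 + (1 + δ) * (r ^ 2 * s ^ 2)) from by rw [hr2]; ring]
    nlinarith [mul_le_mul_of_nonneg_left hbasic (le_of_lt hM),
      mul_nonneg (by positivity : (0:ℝ) ≤ δ / 2) (sq_nonneg ((δ + 2) * r * s - 2 * a)),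
      mul_nonneg (by positivity : (0:ℝ) ≤ (δ + 2) / 2) (sq_nonneg (δ * r * s - 2 * b))]
  have key : a ^ 2 * ((1 + 2 / δ)⁻¹ - K) ≤
      (4 * μ * σ ^ 2 + 2 * (1 + δ) * (R₀ : ℝ) * s ^ 2) + ((1 + 2 / δ) + K) * b ^ 2 := by
    have e1 : (1 + 2 / δ)⁻¹ - K = (δ * δ - K * (δ * (δ + 2))) / (δ * (δ + 2)) := by
      field_simp
    have e2 : (1 + 2 / δ) + K = ((δ + 2) ^ 2 + K * (δ * (δ + 2))) / (δ * (δ + 2)) := by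
      field_simp
    rw [e1, e2]
    have h3 : a ^ 2 * ((δ * δ - K * (δ * (δ + 2))) / (δ * (δ + 2)))
        = (a ^ 2 * (δ * δ - K * (δ * (δ + 2)))) / (δ * (δ + 2)) := by ring
    have h4 : (4 * μ * σ ^ 2 + 2 * (1 + δ) * (R₀ : ℝ) * s ^ 2)
          + (((δ + 2) ^ 2 + K * (δ * (δ + 2))) / (δ * (δ + 2))) * b ^ 2
        = (δ * (δ + 2) * (4 * μ * σ ^ 2 + 2 * (1 + δ) * (R₀ : ℝ) * s ^ 2)
            + ((δ + 2) ^ 2 + K * (δ * (δ + 2))) * b ^ 2) / (δ * (δ + 2)) := by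
      field_simp
    rw [h3, h4]
    gcongr
  have hrhs : ((1 + 2 / δ)⁻¹ - K)⁻¹ * (4 * μ * σ ^ 2 + 2 * (1 + δ) * (R₀ : ℝ) * s ^ 2)
        + (((1 + 2 / δ) + K) / ((1 + 2 / δ)⁻¹ - K)) * b ^ 2
      = ((4 * μ * σ ^ 2 + 2 * (1 + δ) * (R₀ : ℝ) * s ^ 2) + ((1 + 2 / δ) + K) * b ^ 2)
          / ((1 + 2 / δ)⁻¹ - K) := by ring
  rw [hrhs, le_div_iff₀ hpos]
  exact key
end

section
/- Let Z be a real n×d matrix such that ZᵀZ is invertible, let P = Z(ZᵀZ)⁻¹Zᵀ, let E be a real n×q matrix, and let M be a real d×q matrix with rank(M) ≤ r for an integer r ≥ 1. Then |⟨E, Z M⟩_F| ≤ σ₁(P E) · √r · ‖Z M‖_F. -/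
open Matrix
open scoped RealInnerProductSpace

lemma innerE {q : ℕ} (x y : EuclideanSpace ℝ (Fin q)) : ⟪x, y⟫ = ∑ i, x i * y i := by
  simp [PiLp.inner_apply, RCLike.inner_apply]
  exact Finset.sum_congr rfl fun _ _ => mul_comm _ _

lemma self_le_sq_sqrt (s : ℝ) : s ≤ Real.sqrt s ^ 2 := by
  rcases le_or_gt 0 s with h | h
  · rw [Real.sq_sqrt h]
  · nlinarith [Real.sqrt_nonneg s]

lemma sum_symm {q : ℕ} (H : Matrix (Fin q) (Fin q) ℝ) (hs : Hᵀ = H) (u v : Fin q → ℝ) :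
    ∑ t, u t * (H *ᵥ v) t = ∑ t, (H *ᵥ u) t * v t := by
  have h1 : u ᵥ* H = H *ᵥ u := by
    conv_lhs => rw [← hs]
    rw [Matrix.vecMul_transpose]
  show u ⬝ᵥ (H *ᵥ v) = (H *ᵥ u) ⬝ᵥ v
  rw [Matrix.dotProduct_mulVec, h1]

lemma rayleigh {n q : ℕ} (A : Matrix (Fin n) (Fin q) ℝ) (x : Fin q → ℝ) :
    ∑ j, (A.mulVec x) j ^ 2 ≤ sigma1 A ^ 2 * ∑ t, x t ^ 2 := by
  rcases Nat.eq_zero_or_pos q with hq | hq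
  · subst hq
    simp [Matrix.mulVec, dotProduct]
  haveI : NeZero q := ⟨hq.ne'⟩
  have hH := herm A
  set H := Aᵀ * A with hHdef
  set μ := hH.eigenvalues with hμ
  set x' : EuclideanSpace ℝ (Fin q) := (WithLp.equiv 2 _).symm x with hx'
  set y' : EuclideanSpace ℝ (Fin q) := (WithLp.equiv 2 _).symm (H *ᵥ x) with hy'
  have hsymm : Hᵀ = H := by
    rw [hHdef, Matrix.transpose_mul, Matrix.transpose_transpose]
  have step1 : ∑ j, (A.mulVec x) j ^ 2 = ∑ t, x t * (H *ᵥ x) t := by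
    have : ∑ t, x t * (H *ᵥ x) t = x ⬝ᵥ (H *ᵥ x) := rfl
    rw [this, hHdef, ← Matrix.mulVec_mulVec, Matrix.dotProduct_mulVec,
      Matrix.vecMul_transpose]
    simp [dotProduct, sq]
  have h : ∑ i, (∑ t, x t * hH.eigenvectorBasis i t) *
      (∑ t, hH.eigenvectorBasis i t * (H *ᵥ x) t) = ∑ t, x t * (H *ᵥ x) t := by
    have hh := hH.eigenvectorBasis.sum_inner_mul_inner x' y'
    simp only [innerE] at hh
    exact hh
  have h2 : ∑ i, (∑ t, x t * hH.eigenvectorBasis i t) *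
      (∑ t, hH.eigenvectorBasis i t * x t) = ∑ t, x t * x t := by
    have hh := hH.eigenvectorBasis.sum_inner_mul_inner x' x'
    simp only [innerE] at hh
    exact hh
  have key : ∀ i, ∑ t, hH.eigenvectorBasis i t * (H *ᵥ x) t
      = μ i * ∑ t, hH.eigenvectorBasis i t * x t := by
    intro i
    rw [sum_symm H hsymm _ x]
    have heig := hH.mulVec_eigenvectorBasis i
    have hp : ∀ t, (H *ᵥ fun t => hH.eigenvectorBasis i t) t = μ i * hH.eigenvectorBasis i t := by
      intro t
      have := congrFun heig t
      simpa using this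
    simp only [hp]
    rw [Finset.mul_sum]
    simp only [mul_assoc]
  have hγ : ∑ t, x t * (H *ᵥ x) t
      = ∑ i, μ i * (∑ t, x t * hH.eigenvectorBasis i t) ^ 2 := by
    rw [← h]
    refine Finset.sum_congr rfl fun i _ => ?_
    rw [key i]
    have hcomm : ∑ t, hH.eigenvectorBasis i t * x t
        = ∑ t, x t * hH.eigenvectorBasis i t :=
      Finset.sum_congr rfl fun t _ => mul_comm _ _
    rw [hcomm]; ring
  have hsq : ∑ i, (∑ t, x t * hH.eigenvectorBasis i t) ^ 2 = ∑ t, x t ^ 2 := by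
    have e1 : ∑ i, (∑ t, x t * hH.eigenvectorBasis i t) ^ 2
        = ∑ i, (∑ t, x t * hH.eigenvectorBasis i t) *
            (∑ t, hH.eigenvectorBasis i t * x t) := by
      refine Finset.sum_congr rfl fun i _ => ?_
      rw [sq]
      congr 1
      exact Finset.sum_congr rfl fun t _ => mul_comm _ _
    rw [e1, h2]
    exact Finset.sum_congr rfl fun t _ => (sq (x t)).symm
  have hsup : ∀ i, μ i ≤ ⨆ j, μ j := fun i =>
    le_ciSup (Set.finite_range μ).bddAbove i
  calc ∑ j, (A.mulVec x) j ^ 2 = ∑ t, x t * (H *ᵥ x) t := step1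
    _ = ∑ i, μ i * (∑ t, x t * hH.eigenvectorBasis i t) ^ 2 := hγ
    _ ≤ ∑ i, (⨆ j, μ j) * (∑ t, x t * hH.eigenvectorBasis i t) ^ 2 :=
        Finset.sum_le_sum fun i _ => mul_le_mul_of_nonneg_right (hsup i) (sq_nonneg _)
    _ = (⨆ j, μ j) * ∑ i, (∑ t, x t * hH.eigenvectorBasis i t) ^ 2 :=
        (Finset.mul_sum _ _ _).symm
    _ = (⨆ j, μ j) * ∑ t, x t ^ 2 := by rw [hsq]
    _ ≤ sigma1 A ^ 2 * ∑ t, x t ^ 2 := by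
        refine mul_le_mul_of_nonneg_right ?_ (by positivity)
        rw [hμ]
        exact self_le_sq_sqrt _

lemma sigma1_nonneg {m n : ℕ} (A : Matrix (Fin m) (Fin n) ℝ) : 0 ≤ sigma1 A :=
  Real.sqrt_nonneg _

lemma abs_sum_mul_le {ι : Type*} [Fintype ι] (f g : ι → ℝ) :
    |∑ i, f i * g i| ≤ Real.sqrt (∑ i, f i ^ 2) * Real.sqrt (∑ i, g i ^ 2) := by
  have h := Finset.sum_mul_sq_le_sq_mul_sq Finset.univ f g
  calc |∑ i, f i * g i| = Real.sqrt ((∑ i, f i * g i) ^ 2) := (Real.sqrt_sq_eq_abs _).symm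
    _ ≤ Real.sqrt ((∑ i, f i ^ 2) * ∑ i, g i ^ 2) := Real.sqrt_le_sqrt h
    _ = _ := Real.sqrt_mul (by positivity) _

lemma core {n q : ℕ} (A W : Matrix (Fin n) (Fin q) ℝ) (r : ℕ) (hW : W.rank ≤ r) :
    |Matrix.trace (Aᵀ * W)| ≤ sigma1 A * Real.sqrt r * frobNorm W := by
  classical
  set S' : Submodule ℝ (Fin q → ℝ) := Submodule.span ℝ (Set.range W) with hS'
  set S : Submodule ℝ (EuclideanSpace ℝ (Fin q)) :=
    S'.map ((WithLp.linearEquiv 2 ℝ (Fin q → ℝ)).symm :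
      (Fin q → ℝ) →ₗ[ℝ] EuclideanSpace ℝ (Fin q)) with hS
  have hkr : Module.finrank ℝ S ≤ r := by
    rw [hS, LinearEquiv.finrank_map_eq]
    have h1 : Wᵀ.rank = Module.finrank ℝ S' := by
      rw [Matrix.rank_eq_finrank_span_cols]
      rfl
    rw [hS', ← h1, Matrix.rank_transpose]
    exact hW
  set k := Module.finrank ℝ S with hkdef
  let b : OrthonormalBasis (Fin k) ℝ S := stdOrthonormalBasis ℝ S
  let c : Fin k → (Fin q → ℝ) := fun i t => (b i : EuclideanSpace ℝ (Fin q)) t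
  let α : Fin n → Fin k → ℝ := fun j i => ∑ t, c i t * W j t
  have hmem : ∀ j, (WithLp.equiv 2 (Fin q → ℝ)).symm (W j) ∈ S := fun j =>
    ⟨W j, Submodule.subset_span ⟨j, rfl⟩, rfl⟩
  have hin : ∀ (j) (i), ⟪b i, (⟨_, hmem j⟩ : S)⟫ = α j i := by
    intro j i
    rw [Submodule.coe_inner, innerE]
    rfl
  have F1 : ∀ j t, W j t = ∑ i, α j i * c i t := by
    intro j t
    have h := b.sum_repr' (⟨_, hmem j⟩ : S)
    have h2 := congrArg
      (fun v : S => (PiLp.projₗ (𝕜 := ℝ) 2 (fun _ : Fin q => ℝ) t) (S.subtype v)) h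
    simp only [map_sum, _root_.map_smul, smul_eq_mul] at h2
    simp only [hin] at h2
    exact h2.symm
  have hc : ∀ i, ∑ t, c i t ^ 2 = 1 := by
    intro i
    have h1 : ‖b i‖ = 1 := b.orthonormal.1 i
    have h2 : ⟪b i, b i⟫ = 1 := by
      rw [real_inner_self_eq_norm_sq, h1, one_pow]
    rw [Submodule.coe_inner, innerE] at h2
    calc ∑ t, c i t ^ 2 = ∑ t, c i t * c i t :=
          Finset.sum_congr rfl fun t _ => sq (c i t)
      _ = 1 := h2
  have hmv : ∀ i j, (W *ᵥ c i) j = α j i := by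
    intro i j
    show ∑ t, W j t * c i t = ∑ t, c i t * W j t
    exact Finset.sum_congr rfl fun t _ => mul_comm _ _
  have hrowsq : ∀ j, ∑ t, W j t ^ 2 = ∑ i, α j i ^ 2 := by
    intro j
    calc ∑ t, W j t ^ 2 = ∑ t, (∑ i, α j i * c i t) * W j t := by
          refine Finset.sum_congr rfl fun t _ => ?_
          rw [sq, ← F1 j t]
      _ = ∑ t, ∑ i, α j i * (c i t * W j t) := by
          refine Finset.sum_congr rfl fun t _ => ?_
          rw [Finset.sum_mul]
          exact Finset.sum_congr rfl fun i _ => by ring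
      _ = ∑ i, ∑ t, α j i * (c i t * W j t) := Finset.sum_comm
      _ = ∑ i, α j i ^ 2 := by
          refine Finset.sum_congr rfl fun i _ => ?_
          rw [← Finset.mul_sum, sq]
  have htr : Matrix.trace (Aᵀ * W)
      = ∑ i : Fin k, ∑ j : Fin n, (W *ᵥ c i) j * (A *ᵥ c i) j := by
    calc Matrix.trace (Aᵀ * W) = ∑ p, ∑ j, A j p * W j p := by
          simp [Matrix.trace, Matrix.diag, Matrix.mul_apply, Matrix.transpose_apply]
      _ = ∑ j, ∑ p, A j p * W j p := Finset.sum_comm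
      _ = ∑ j, ∑ i, (W *ᵥ c i) j * (A *ᵥ c i) j := by
          refine Finset.sum_congr rfl fun j _ => ?_
          calc ∑ p, A j p * W j p = ∑ p, ∑ i, α j i * (A j p * c i p) := by
                refine Finset.sum_congr rfl fun p _ => ?_
                rw [F1 j p, Finset.mul_sum]
                exact Finset.sum_congr rfl fun i _ => by ring
            _ = ∑ i, ∑ p, α j i * (A j p * c i p) := Finset.sum_comm
            _ = ∑ i, (W *ᵥ c i) j * (A *ᵥ c i) j := by
                refine Finset.sum_congr rfl fun i _ => ?_
                rw [hmv i j, ← Finset.mul_sum]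
                rfl
      _ = ∑ i, ∑ j, (W *ᵥ c i) j * (A *ᵥ c i) j := Finset.sum_comm
  set β : Fin k → ℝ := fun i => Real.sqrt (∑ j, (W *ᵥ c i) j ^ 2) with hβ
  have habs : |Matrix.trace (Aᵀ * W)| ≤ (∑ i, β i) * sigma1 A := by
    rw [htr, Finset.sum_mul]
    refine (Finset.abs_sum_le_sum_abs _ _).trans ?_
    refine Finset.sum_le_sum fun i _ => ?_
    refine (abs_sum_mul_le _ _).trans ?_
    refine mul_le_mul_of_nonneg_left ?_ (Real.sqrt_nonneg _)
    have hray := rayleigh A (c i)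
    rw [hc i, mul_one] at hray
    calc Real.sqrt (∑ j, (A *ᵥ c i) j ^ 2) ≤ Real.sqrt (sigma1 A ^ 2) :=
          Real.sqrt_le_sqrt hray
      _ = sigma1 A := Real.sqrt_sq (sigma1_nonneg A)
  have hβsq : ∑ i, β i ^ 2 = ∑ j, ∑ t, W j t ^ 2 := by
    have h1 : ∀ i, β i ^ 2 = ∑ j, (W *ᵥ c i) j ^ 2 := fun i =>
      Real.sq_sqrt (by positivity)
    calc ∑ i, β i ^ 2 = ∑ i, ∑ j, (W *ᵥ c i) j ^ 2 :=
          Finset.sum_congr rfl fun i _ => h1 i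
      _ = ∑ j, ∑ i, (W *ᵥ c i) j ^ 2 := Finset.sum_comm
      _ = ∑ j, ∑ t, W j t ^ 2 := by
          refine Finset.sum_congr rfl fun j _ => ?_
          rw [hrowsq j]
          exact Finset.sum_congr rfl fun i _ => by rw [hmv i j]
  have hfrob : frobNorm W = Real.sqrt (∑ j, ∑ t, W j t ^ 2) := by
    have : Matrix.trace (Wᵀ * W) = ∑ j, ∑ t, W j t ^ 2 := by
      rw [show (∑ j, ∑ t, W j t ^ 2) = ∑ t, ∑ j, W j t ^ 2 from Finset.sum_comm]
      simp [Matrix.trace, Matrix.diag, Matrix.mul_apply, Matrix.transpose_apply, sq]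
    rw [frobNorm, this]
  have hsumβ : ∑ i, β i ≤ Real.sqrt k * frobNorm W := by
    have h := abs_sum_mul_le (fun _ : Fin k => (1 : ℝ)) β
    simp only [one_mul, one_pow] at h
    have h1 : (∑ _i : Fin k, (1 : ℝ)) = (k : ℝ) := by simp
    rw [h1] at h
    calc ∑ i, β i ≤ |∑ i, β i| := le_abs_self _
      _ ≤ Real.sqrt k * Real.sqrt (∑ i, β i ^ 2) := h
      _ = Real.sqrt k * frobNorm W := by rw [hβsq, hfrob]
  calc |Matrix.trace (Aᵀ * W)| ≤ (∑ i, β i) * sigma1 A := habs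
    _ ≤ (Real.sqrt k * frobNorm W) * sigma1 A :=
        mul_le_mul_of_nonneg_right hsumβ (sigma1_nonneg A)
    _ ≤ (Real.sqrt r * frobNorm W) * sigma1 A := by
        refine mul_le_mul_of_nonneg_right (mul_le_mul_of_nonneg_right ?_ ?_) (sigma1_nonneg A)
        · exact Real.sqrt_le_sqrt (by exact_mod_cast hkr)
        · rw [hfrob]; positivity
    _ = sigma1 A * Real.sqrt r * frobNorm W := by ring

/-- Bound on the cross term: `|⟨E, ZM⟩_F| ≤ σ₁(PE)·√r·‖ZM‖_F` for
`P = Z(ZᵀZ)⁻¹Zᵀ` and `rank(M) ≤ r`. -/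
theorem stmt_12 {n d q : ℕ} (Z : Matrix (Fin n) (Fin d) ℝ)
    (hZ : IsUnit (Zᵀ * Z).det)
    (E : Matrix (Fin n) (Fin q) ℝ) (M : Matrix (Fin d) (Fin q) ℝ)
    (r : ℕ) (hr : 1 ≤ r) (hM : M.rank ≤ r) :
    |Matrix.trace (Eᵀ * (Z * M))| ≤
      sigma1 (Z * (Zᵀ * Z)⁻¹ * Zᵀ * E) * Real.sqrt r * frobNorm (Z * M) := by
  have h1 : ((Zᵀ * Z)⁻¹)ᵀ = (Zᵀ * Z)⁻¹ := by
    rw [Matrix.transpose_nonsing_inv, Matrix.transpose_mul, Matrix.transpose_transpose]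
  have h2 : (Zᵀ * Z)⁻¹ * (Zᵀ * Z) = 1 := Matrix.nonsing_inv_mul _ hZ
  have key : (Zᵀ * Z)⁻¹ * (Zᵀ * (Z * M)) = M := by
    rw [show Zᵀ * (Z * M) = (Zᵀ * Z) * M from (Matrix.mul_assoc _ _ _).symm,
      ← Matrix.mul_assoc, h2, Matrix.one_mul]
  have hA : (Z * (Zᵀ * Z)⁻¹ * Zᵀ * E)ᵀ * (Z * M) = Eᵀ * (Z * M) := by
    simp only [Matrix.transpose_mul, Matrix.transpose_transpose, h1, Matrix.mul_assoc, key]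
  have hrank : (Z * M).rank ≤ r := le_trans (Matrix.rank_mul_le_right Z M) hM
  have h := core (Z * (Zᵀ * Z)⁻¹ * Zᵀ * E) (Z * M) r hrank
  rwa [hA] at h
end
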